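/- The configuration space of two distinct labeled points on the Y-graph (three edges joined at a single central vertex), restricted to configurations where the two points lie on distinct edges (including the case that one point is at the central vertex), is homeomorphic to the product S^1 × (0,1], i.e., a punctured disc. -/

import Mathlib

open Set

/-- Equivalence gluing the three copies of `[0,1]` at their `0`-endpoints. -/
def yRel (a b : Fin 3 × Icc (0:ℝ) 1) : Prop :=
  a = b ∨ ((a.2 : ℝ) = 0 ∧ (b.2 : ℝ) = 0)

def ySetoid : Setoid (Fin 3 × Icc (0:ℝ) 1) where
  r := yRel
  iseqv := by
    constructor
    · intro a; exact Or.inl rfl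
    · rintro a b (rfl | ⟨h1, h2⟩); exacts [Or.inl rfl, Or.inr ⟨h2, h1⟩]
    · rintro a b c (rfl | ⟨h1, h2⟩) (rfl | ⟨h3, h4⟩)
      exacts [Or.inl rfl, Or.inr ⟨h3, h4⟩, Or.inr ⟨h1, h2⟩, Or.inr ⟨h1, h4⟩]

/-- The Y-graph: three edges `[0,1]` joined at a single central vertex. -/
def YGraph : Type := Quotient ySetoid

instance : TopologicalSpace YGraph := instTopologicalSpaceQuotient

/-- The point of the Y-graph on edge `i` at parameter `t`. -/
def YGraph.pt (i : Fin 3) (t : Icc (0:ℝ) 1) : YGraph := Quotient.mk ySetoid (i, t)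

/-- The subspace `D` of the configuration space of two distinct labeled points on the
Y-graph consisting of configurations in which the two points do not lie in the
interior of the same edge (one point may be at the central vertex). -/
def DSpace : Set (YGraph × YGraph) :=
  {p | p.1 ≠ p.2 ∧
    ¬ ∃ (i : Fin 3) (t s : Icc (0:ℝ) 1), 0 < (t : ℝ) ∧ 0 < (s : ℝ) ∧
      p.1 = YGraph.pt i t ∧ p.2 = YGraph.pt i s}
noncomputable section YAux

/-! ### The algebraic model: three unit vectors summing to zero -/

def sq3 : ℝ := Real.sqrt 3
lemma sq3_pos : 0 < sq3 := Real.sqrt_pos.mpr (by norm_num)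
lemma sq3_sq : sq3 ^ 2 = 3 := Real.sq_sqrt (by norm_num)
lemma sq3_ne : sq3 ≠ 0 := ne_of_gt sq3_pos

def Pv : Fin 3 → ℂ := ![1, ⟨-1/2, sq3/2⟩, ⟨-1/2, -(sq3/2)⟩]

lemma Pv_norm (i : Fin 3) : ‖Pv i‖ = 1 := by
  have h : ∀ z : ℂ, z.re^2 + z.im^2 = 1 → ‖z‖ = 1 := by
    intro z hz
    have h2 : ‖z‖ ^ 2 = 1 := by
      rw [Complex.sq_norm, Complex.normSq_apply]
      nlinarith [hz]
    nlinarith [norm_nonneg z]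
  fin_cases i <;> apply h <;> simp [Pv] <;> nlinarith [sq3_sq]

lemma Pv_ne_zero (i : Fin 3) : Pv i ≠ 0 := by
  intro h; have := Pv_norm i; rw [h] at this; simp at this

lemma norm_smul_Pv (t : ℝ) (i : Fin 3) (ht : 0 ≤ t) : ‖t • Pv i‖ = t := by
  rw [norm_smul, Pv_norm, Real.norm_eq_abs, abs_of_nonneg ht, mul_one]

lemma Pv_kernel {v0 v1 v2 : ℝ} (h : v0 • Pv 0 + v1 • Pv 1 + v2 • Pv 2 = 0) :
    v0 = v1 ∧ v1 = v2 := by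
  have hre := congrArg Complex.re h
  have him := congrArg Complex.im h
  simp [Pv, Complex.ext_iff] at hre him
  constructor <;> nlinarith [sq3_pos, sq3_sq, hre, him]

lemma Pv_single (i : Fin 3) (a : ℝ) :
    (if i = 0 then a else 0) • Pv 0 + (if i = 1 then a else 0) • Pv 1
      + (if i = 2 then a else 0) • Pv 2 = a • Pv i := by
  fin_cases i <;> simp

set_option maxHeartbeats 1000000 in
/-- Main separation lemma. -/
lemma Pv_sep {i j k l : Fin 3} (hij : i ≠ j) (hkl : k ≠ l) {a b c d : ℝ}
    (ha : 0 ≤ a) (hb : 0 ≤ b) (hc : 0 ≤ c) (hd : 0 ≤ d)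
    (h : a • Pv i - b • Pv j = c • Pv k - d • Pv l) :
    a • Pv i = c • Pv k ∧ b • Pv j = d • Pv l := by
  have hker :
      ((if i = 0 then a else 0) - (if j = 0 then b else 0)
        - (if k = 0 then c else 0) + (if l = 0 then d else 0))
      = ((if i = 1 then a else 0) - (if j = 1 then b else 0)
        - (if k = 1 then c else 0) + (if l = 1 then d else 0))
    ∧ ((if i = 1 then a else 0) - (if j = 1 then b else 0)
        - (if k = 1 then c else 0) + (if l = 1 then d else 0))
      = ((if i = 2 then a else 0) - (if j = 2 then b else 0)
        - (if k = 2 then c else 0) + (if l = 2 then d else 0)) := by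
    apply Pv_kernel
    have E : ((if i = 0 then a else 0) - (if j = 0 then b else 0)
        - (if k = 0 then c else 0) + (if l = 0 then d else 0)) • Pv 0
      + ((if i = 1 then a else 0) - (if j = 1 then b else 0)
        - (if k = 1 then c else 0) + (if l = 1 then d else 0)) • Pv 1
      + ((if i = 2 then a else 0) - (if j = 2 then b else 0)
        - (if k = 2 then c else 0) + (if l = 2 then d else 0)) • Pv 2
      = ((if i = 0 then a else 0) • Pv 0 + (if i = 1 then a else 0) • Pv 1
          + (if i = 2 then a else 0) • Pv 2)
        - ((if j = 0 then b else 0) • Pv 0 + (if j = 1 then b else 0) • Pv 1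
          + (if j = 2 then b else 0) • Pv 2)
        - ((if k = 0 then c else 0) • Pv 0 + (if k = 1 then c else 0) • Pv 1
          + (if k = 2 then c else 0) • Pv 2)
        + ((if l = 0 then d else 0) • Pv 0 + (if l = 1 then d else 0) • Pv 1
          + (if l = 2 then d else 0) • Pv 2) := by
      simp only [sub_smul, add_smul]; abel
    rw [E, Pv_single i a, Pv_single j b, Pv_single k c, Pv_single l d, h]
    abel
  obtain ⟨h01, h12⟩ := hker
  have key : a = c ∧ b = d ∧ (i ≠ k → a = 0) ∧ (j ≠ l → b = 0) := by
    fin_cases i <;> fin_cases j <;> fin_cases k <;> fin_cases l <;>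
      first
      | exact absurd rfl hij
      | exact absurd rfl hkl
      | (norm_num [Fin.ext_iff] at h01 h12
         exact ⟨by linarith, by linarith,
           fun hh => by first | exact absurd rfl hh | linarith,
           fun hh => by first | exact absurd rfl hh | linarith⟩)
  obtain ⟨hac, hbd, hik, hjl⟩ := key
  constructor
  · by_cases hik' : i = k
    · rw [hik', hac]
    · have hc0 : c = 0 := by rw [← hac]; exact hik hik'
      rw [hik hik', hc0]; simp
  · by_cases hjl' : j = l
    · rw [hjl', hbd]
    · have hd0 : d = 0 := by rw [← hbd]; exact hjl hjl'
      rw [hjl hjl', hd0]; simp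

/-- Two different edges meet only at the origin. -/
lemma Pv_opp {i j : Fin 3} (hij : i ≠ j) {t s : ℝ} (ht : 0 ≤ t) (hs : 0 ≤ s)
    (h : t • Pv i = s • Pv j) : t = 0 ∧ s = 0 := by
  have h' : t • Pv i - s • Pv j = (0:ℝ) • Pv i - (0:ℝ) • Pv j := by
    simp [sub_eq_zero, h]
  obtain ⟨h1, h2⟩ := Pv_sep hij hij ht hs le_rfl le_rfl h'
  simp only [zero_smul, smul_eq_zero] at h1 h2
  exact ⟨h1.resolve_right (Pv_ne_zero i), h2.resolve_right (Pv_ne_zero j)⟩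

lemma Pv_same {i : Fin 3} {t s : ℝ} (ht : 0 ≤ t) (hs : 0 ≤ s)
    (h : t • Pv i = s • Pv i) : t = s := by
  have := congrArg norm h
  rwa [norm_smul_Pv _ _ ht, norm_smul_Pv _ _ hs] at this

private lemma key_div (u v : ℝ) (h : 0 ≤ sq3 * u + v) : 0 ≤ u + v / sq3 := by
  have h2 : 0 ≤ (sq3 * u + v) / sq3 := div_nonneg h sq3_pos.le
  rwa [add_div, mul_div_cancel_left₀ u sq3_ne] at h2

/-- Every complex number lies in one of the six cones. -/
lemma Pv_cover (z : ℂ) :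
    ∃ i j : Fin 3, i ≠ j ∧ ∃ a b : ℝ, 0 ≤ a ∧ 0 ≤ b ∧ z = a • Pv i - b • Pv j := by
  obtain ⟨x, y⟩ := z
  have h3 := sq3_pos
  have h3s := sq3_sq
  rcases le_total 0 y with hy | hy
  · rcases le_total y (sq3 * x) with hxy | hxy
    · refine ⟨0, 2, by decide, x - y / sq3, 2 * y / sq3, by
        have hk := key_div x (-y) (by linarith); rw [neg_div] at hk; linarith, by
        exact div_nonneg (by linarith) sq3_pos.le, ?_⟩
      simp only [Pv, Complex.ext_iff, Complex.sub_re, Complex.sub_im, Complex.real_smul,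
        Complex.mul_re, Complex.mul_im, Complex.ofReal_re, Complex.ofReal_im]
      norm_num [Matrix.cons_val_zero, Matrix.cons_val, Matrix.cons_val_two, Matrix.tail_cons, Matrix.head_cons]
      constructor <;> field_simp <;> ring
    · rcases le_total (-y) (sq3 * x) with hxy2 | hxy2
      · refine ⟨1, 2, by decide, y / sq3 - x, y / sq3 + x, by
          have hk := key_div (-x) y (by linarith); linarith, by
          have hk := key_div x y (by linarith); linarith, ?_⟩
        simp only [Pv, Complex.ext_iff, Complex.sub_re, Complex.sub_im, Complex.real_smul,
          Complex.mul_re, Complex.mul_im, Complex.ofReal_re, Complex.ofReal_im]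
        norm_num [Matrix.cons_val, Matrix.cons_val_two, Matrix.tail_cons, Matrix.head_cons]
        constructor <;> field_simp <;> ring
      · refine ⟨1, 0, by decide, 2 * y / sq3, -x - y / sq3, by
          exact div_nonneg (by linarith) sq3_pos.le, by
          have hk := key_div (-x) (-y) (by linarith); rw [neg_div] at hk; linarith, ?_⟩
        simp only [Pv, Complex.ext_iff, Complex.sub_re, Complex.sub_im, Complex.real_smul,
          Complex.mul_re, Complex.mul_im, Complex.ofReal_re, Complex.ofReal_im]
        norm_num
        constructor <;> field_simp <;> ring
  · rcases le_total (sq3 * x) y with hxy | hxy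
    · refine ⟨2, 0, by decide, -(2 * y) / sq3, -x + y / sq3, by
        exact div_nonneg (by linarith) sq3_pos.le, by
        have hk := key_div (-x) y (by linarith); linarith, ?_⟩
      simp only [Pv, Complex.ext_iff, Complex.sub_re, Complex.sub_im, Complex.real_smul,
        Complex.mul_re, Complex.mul_im, Complex.ofReal_re, Complex.ofReal_im]
      norm_num [Matrix.cons_val, Matrix.cons_val_two, Matrix.tail_cons, Matrix.head_cons]
      constructor <;> field_simp <;> ring
    · rcases le_total (sq3 * x) (-y) with hxy2 | hxy2
      · refine ⟨2, 1, by decide, -(y / sq3) - x, -(y / sq3) + x, by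
          have hk := key_div (-x) (-y) (by linarith); rw [neg_div] at hk; linarith, by
          have hk := key_div x (-y) (by linarith); rw [neg_div] at hk; linarith, ?_⟩
        simp only [Pv, Complex.ext_iff, Complex.sub_re, Complex.sub_im, Complex.real_smul,
          Complex.mul_re, Complex.mul_im, Complex.ofReal_re, Complex.ofReal_im]
        norm_num [Matrix.cons_val, Matrix.cons_val_two, Matrix.tail_cons, Matrix.head_cons]
        constructor <;> field_simp <;> ring
      · refine ⟨0, 1, by decide, x + y / sq3, -(2 * y) / sq3, by
          have hk := key_div x y (by linarith); linarith, by
          exact div_nonneg (by linarith) sq3_pos.le, ?_⟩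
        simp only [Pv, Complex.ext_iff, Complex.sub_re, Complex.sub_im, Complex.real_smul,
          Complex.mul_re, Complex.mul_im, Complex.ofReal_re, Complex.ofReal_im]
        norm_num
        constructor <;> field_simp <;> ring

/-! ### Embedding the Y-graph into the complex plane -/

def phiAux : Fin 3 × Icc (0:ℝ) 1 → ℂ := fun p => (p.2 : ℝ) • Pv p.1

lemma phiAux_rel : ∀ a b : Fin 3 × Icc (0:ℝ) 1, yRel a b → phiAux a = phiAux b := by
  rintro a b (rfl | ⟨h1, h2⟩)
  · rfl
  · simp [phiAux, h1, h2]

def phi : YGraph → ℂ := Quotient.lift phiAux phiAux_rel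

lemma phi_pt (i : Fin 3) (t : Icc (0:ℝ) 1) : phi (YGraph.pt i t) = (t : ℝ) • Pv i := rfl

lemma phiAux_cont : Continuous phiAux := by
  refine Continuous.smul (f := fun p : Fin 3 × Icc (0:ℝ) 1 => (p.2 : ℝ)) (g := fun p => Pv p.1) ?_ ?_
  · exact continuous_subtype_val.comp continuous_snd
  · exact (continuous_of_discreteTopology (f := Pv)).comp continuous_fst

lemma phi_cont : Continuous phi := by exact Continuous.quotient_lift phiAux_cont phiAux_rel

lemma ygraph_rep (x : YGraph) : ∃ i t, x = YGraph.pt i t := by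
  obtain ⟨⟨i, t⟩, h⟩ := Quotient.exists_rep x
  exact ⟨i, t, h.symm⟩

lemma phi_inj : Function.Injective phi := by
  intro x y
  refine Quotient.inductionOn₂ x y ?_
  rintro ⟨i, t⟩ ⟨j, s⟩ h
  have h' : (t : ℝ) • Pv i = (s : ℝ) • Pv j := h
  apply Quotient.sound
  by_cases hij : i = j
  · subst hij
    left
    have := Pv_same t.2.1 s.2.1 h'
    exact Prod.ext rfl (Subtype.ext this)
  · right
    exact Pv_opp hij t.2.1 s.2.1 h'

instance : CompactSpace YGraph := by
  constructor
  have hs : (univ : Set YGraph) = Quotient.mk ySetoid '' univ := by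
    ext x
    simp only [mem_univ, true_iff, mem_image]
    obtain ⟨a, h⟩ := Quotient.exists_rep x
    exact ⟨a, trivial, h⟩
  rw [hs]
  exact isCompact_univ.image continuous_quotient_mk'

/-- The Y-graph is homeomorphic to its image in `ℂ`. -/
def psi : YGraph ≃ₜ ↥(range phi) := by
  refine Continuous.homeoOfEquivCompactToT2 (f := Equiv.ofInjective phi phi_inj) ?_
  have : ⇑(Equiv.ofInjective phi phi_inj) = fun x => (⟨phi x, mem_range_self x⟩ : range phi) := by
    funext x; exact Subtype.ext rfl
  rw [this]
  exact phi_cont.subtype_mk _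

lemma psi_coe (x : YGraph) : (psi x : ℂ) = phi x := rfl

lemma phi_psi_symm (z : range phi) : phi (psi.symm z) = (z : ℂ) := by
  conv_rhs => rw [← psi.apply_symm_apply z]
  exact (psi_coe _).symm

lemma psi_symm_phi (x : YGraph) : psi.symm ⟨phi x, mem_range_self x⟩ = x := by
  apply psi.injective
  apply Subtype.ext
  simp [psi_coe]

/-! ### The model configuration sets in the plane -/

def Dset : Set (ℂ × ℂ) :=
  {p | p.1 ≠ p.2 ∧ ∃ i j : Fin 3, ∃ t s : ℝ,
    0 ≤ t ∧ t ≤ 1 ∧ 0 ≤ s ∧ s ≤ 1 ∧ (i ≠ j ∨ t = 0 ∨ s = 0) ∧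
    p.1 = t • Pv i ∧ p.2 = s • Pv j}

def Cset : Set (ℂ × ℂ) := {p | p ∈ Dset ∧ max ‖p.1‖ ‖p.2‖ = 1}

/-- In `Dset` one can always choose distinct edges. -/
lemma Dset_rep {p : ℂ × ℂ} (hp : p ∈ Dset) :
    ∃ i j : Fin 3, i ≠ j ∧ ∃ t s : ℝ,
      0 ≤ t ∧ t ≤ 1 ∧ 0 ≤ s ∧ s ≤ 1 ∧ p.1 = t • Pv i ∧ p.2 = s • Pv j := by
  obtain ⟨-, i, j, t, s, ht0, ht1, hs0, hs1, hd, h1, h2⟩ := hp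
  have hne : ∀ m : Fin 3, m + 1 ≠ m := by decide
  rcases hd with hd | hd | hd
  · exact ⟨i, j, hd, t, s, ht0, ht1, hs0, hs1, h1, h2⟩
  · subst hd
    refine ⟨j + 1, j, hne j, 0, s, le_rfl, zero_le_one, hs0, hs1, ?_, h2⟩
    simp [h1]
  · subst hd
    refine ⟨i, i + 1, (hne i).symm, t, 0, ht0, ht1, le_rfl, zero_le_one, h1, ?_⟩
    simp [h2]

lemma norm_le_one_of_Dset {p : ℂ × ℂ} (hp : p ∈ Dset) : ‖p.1‖ ≤ 1 ∧ ‖p.2‖ ≤ 1 := by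
  obtain ⟨i, j, -, t, s, ht0, ht1, hs0, hs1, h1, h2⟩ := Dset_rep hp
  rw [h1, h2, norm_smul_Pv _ _ ht0, norm_smul_Pv _ _ hs0]
  exact ⟨ht1, hs1⟩

def rD (p : ℂ × ℂ) : ℝ := max ‖p.1‖ ‖p.2‖

lemma rD_pos_of_Dset {p : ℂ × ℂ} (hp : p ∈ Dset) : 0 < rD p := by
  rcases lt_or_ge 0 (rD p) with h | h
  · exact h
  · exfalso
    have h1 : ‖p.1‖ = 0 := le_antisymm (le_trans (le_max_left _ _) h) (norm_nonneg _)
    have h2 : ‖p.2‖ = 0 := le_antisymm (le_trans (le_max_right _ _) h) (norm_nonneg _)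
    exact hp.1 (by rw [norm_eq_zero.mp h1, norm_eq_zero.mp h2])

lemma rD_le_one_of_Dset {p : ℂ × ℂ} (hp : p ∈ Dset) : rD p ≤ 1 :=
  max_le (norm_le_one_of_Dset hp).1 (norm_le_one_of_Dset hp).2

lemma rD_smul (c : ℝ) (hc : 0 ≤ c) (v w : ℂ) : rD (c • v, c • w) = c * rD (v, w) := by
  simp only [rD, norm_smul, Real.norm_eq_abs, abs_of_nonneg hc]
  exact (mul_max_of_nonneg _ _ hc).symm

/-- Scaling by a positive factor preserves `Dset` membership, provided sizes stay `≤ 1`. -/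
lemma smul_mem_Dset {p : ℂ × ℂ} (hp : p ∈ Dset) {c : ℝ} (hc : 0 < c)
    (hle : c * rD p ≤ 1) : (c • p.1, c • p.2) ∈ Dset := by
  obtain ⟨hne, i, j, t, s, ht0, ht1, hs0, hs1, hd, h1, h2⟩ := hp
  have htr : t ≤ rD p := by
    rw [← norm_smul_Pv t i ht0, ← h1]; exact le_max_left _ _
  have hsr : s ≤ rD p := by
    rw [← norm_smul_Pv s j hs0, ← h2]; exact le_max_right _ _
  refine ⟨fun h => hne (smul_right_injective ℂ (ne_of_gt hc) h), i, j, c * t, c * s,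
    by positivity, ?_, by positivity, ?_, ?_, ?_, ?_⟩
  · calc c * t ≤ c * rD p := by nlinarith
    _ ≤ 1 := hle
  · calc c * s ≤ c * rD p := by nlinarith
    _ ≤ 1 := hle
  · rcases hd with hd | hd | hd
    · exact Or.inl hd
    · exact Or.inr (Or.inl (by rw [hd, mul_zero]))
    · exact Or.inr (Or.inr (by rw [hd, mul_zero]))
  · rw [h1, smul_smul]
  · rw [h2, smul_smul]

/-! ### `DSpace ≃ₜ Dset` -/

lemma mem_Dset_of_DSpace {p : YGraph × YGraph} (hp : p ∈ DSpace) :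
    (phi p.1, phi p.2) ∈ Dset := by
  obtain ⟨hne, hs⟩ := hp
  obtain ⟨i, t, hx⟩ := ygraph_rep p.1
  obtain ⟨j, s, hy⟩ := ygraph_rep p.2
  constructor
  · exact fun h => hne (phi_inj h)
  · refine ⟨i, j, t, s, t.2.1, t.2.2, s.2.1, s.2.2, ?_, by rw [hx, phi_pt], by rw [hy, phi_pt]⟩
    by_contra hcon
    push_neg at hcon
    obtain ⟨hij, ht, hsz⟩ := hcon
    exact hs ⟨i, t, s, lt_of_le_of_ne t.2.1 (Ne.symm ht), lt_of_le_of_ne s.2.1 (Ne.symm hsz),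
      hx, by rw [hy, hij]⟩

lemma mem_range_phi_of_Dset {p : ℂ × ℂ} (hp : p ∈ Dset) :
    p.1 ∈ range phi ∧ p.2 ∈ range phi := by
  obtain ⟨i, j, -, t, s, ht0, ht1, hs0, hs1, h1, h2⟩ := Dset_rep hp
  constructor
  · exact ⟨YGraph.pt i ⟨t, ht0, ht1⟩, by rw [phi_pt, h1]⟩
  · exact ⟨YGraph.pt j ⟨s, hs0, hs1⟩, by rw [phi_pt, h2]⟩

lemma mem_DSpace_of_Dset {x y : YGraph} {p : ℂ × ℂ} (hp : p ∈ Dset)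
    (hx : phi x = p.1) (hy : phi y = p.2) : (x, y) ∈ DSpace := by
  obtain ⟨hne, i, j, t, s, ht0, ht1, hs0, hs1, hd, h1, h2⟩ := hp
  constructor
  · intro h
    have h' : x = y := h
    exact hne (by rw [← hx, ← hy, h'])
  · rintro ⟨k, t', s', ht', hs', hxk, hyk⟩
    have hxk' : x = YGraph.pt k t' := hxk
    have hyk' : y = YGraph.pt k s' := hyk
    have e1 : t • Pv i = (t' : ℝ) • Pv k := by
      rw [← h1, ← hx, hxk', phi_pt]
    have e2 : s • Pv j = (s' : ℝ) • Pv k := by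
      rw [← h2, ← hy, hyk', phi_pt]
    have hik : i = k := by
      by_contra hik
      exact absurd (Pv_opp hik ht0 t'.2.1 e1).2 (ne_of_gt ht')
    have hjk : j = k := by
      by_contra hjk
      exact absurd (Pv_opp hjk hs0 s'.2.1 e2).2 (ne_of_gt hs')
    subst hik
    have htt : t = (t' : ℝ) := Pv_same ht0 t'.2.1 e1
    have hss : s = (s' : ℝ) := Pv_same hs0 s'.2.1 (by rw [hjk] at e2; exact e2)
    rcases hd with hd | hd | hd
    · exact hd hjk.symm
    · rw [hd] at htt; exact absurd htt.symm (ne_of_gt ht')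
    · rw [hd] at hss; exact absurd hss.symm (ne_of_gt hs')

/-- First homeomorphism: `DSpace` is homeomorphic to the planar model `Dset`. -/
def homeoDD : DSpace ≃ₜ Dset where
  toFun p := ⟨(phi p.1.1, phi p.1.2), mem_Dset_of_DSpace p.2⟩
  invFun q := ⟨(psi.symm ⟨q.1.1, (mem_range_phi_of_Dset q.2).1⟩,
               psi.symm ⟨q.1.2, (mem_range_phi_of_Dset q.2).2⟩),
    mem_DSpace_of_Dset q.2 (phi_psi_symm _) (phi_psi_symm _)⟩
  left_inv p := by
    apply Subtype.ext
    apply Prod.ext <;> simp only [psi_symm_phi]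
  right_inv q := by
    apply Subtype.ext
    apply Prod.ext <;> simp only [phi_psi_symm]
  continuous_toFun := by
    apply Continuous.subtype_mk
    exact ((phi_cont.comp (continuous_fst.comp continuous_subtype_val)).prodMk
      (phi_cont.comp (continuous_snd.comp continuous_subtype_val)))
  continuous_invFun := by
    apply Continuous.subtype_mk
    apply Continuous.prodMk
    · exact psi.symm.continuous.comp
        (Continuous.subtype_mk (continuous_fst.comp continuous_subtype_val) _)
    · exact psi.symm.continuous.comp
        (Continuous.subtype_mk (continuous_snd.comp continuous_subtype_val) _)

/-! ### `Dset ≃ₜ Cset × Ioc 0 1` -/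

lemma scaled_mem_Cset {p : ℂ × ℂ} (hp : p ∈ Dset) :
    ((rD p)⁻¹ • p.1, (rD p)⁻¹ • p.2) ∈ Cset := by
  have hr := rD_pos_of_Dset hp
  constructor
  · apply smul_mem_Dset hp (inv_pos.mpr hr)
    rw [inv_mul_cancel₀ (ne_of_gt hr)]
  · have : rD ((rD p)⁻¹ • p.1, (rD p)⁻¹ • p.2) = (rD p)⁻¹ * rD p :=
      rD_smul _ (inv_nonneg.mpr hr.le) _ _
    rw [show max ‖(rD p)⁻¹ • p.1‖ ‖(rD p)⁻¹ • p.2‖ = rD ((rD p)⁻¹ • p.1, (rD p)⁻¹ • p.2) from rfl,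
      this, inv_mul_cancel₀ (ne_of_gt hr)]

lemma scaled_mem_Dset {q : ℂ × ℂ} (hq : q ∈ Cset) {u : ℝ} (hu : u ∈ Ioc (0:ℝ) 1) :
    (u • q.1, u • q.2) ∈ Dset := by
  apply smul_mem_Dset hq.1 hu.1
  rw [show rD q = 1 from hq.2, mul_one]
  exact hu.2

def homeoDC : Dset ≃ₜ Cset × Ioc (0:ℝ) 1 where
  toFun p := (⟨((rD p.1)⁻¹ • p.1.1, (rD p.1)⁻¹ • p.1.2), scaled_mem_Cset p.2⟩,
    ⟨rD p.1, rD_pos_of_Dset p.2, rD_le_one_of_Dset p.2⟩)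
  invFun qu := ⟨((qu.2 : ℝ) • qu.1.1.1, (qu.2 : ℝ) • qu.1.1.2),
    scaled_mem_Dset qu.1.2 qu.2.2⟩
  left_inv p := by
    apply Subtype.ext
    have hr := ne_of_gt (rD_pos_of_Dset p.2)
    exact Prod.ext (smul_inv_smul₀ hr _) (smul_inv_smul₀ hr _)
  right_inv := by
    rintro ⟨⟨q, hq⟩, ⟨u, hu⟩⟩
    have hu0 : (0:ℝ) < u := hu.1
    have hrq : rD (u • q.1, u • q.2) = u := by
      rw [rD_smul _ hu0.le, show rD q = 1 from hq.2, mul_one]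
    apply Prod.ext
    · apply Subtype.ext
      refine Prod.ext ?_ ?_ <;>
        · show (rD (u • q.1, u • q.2))⁻¹ • u • _ = _
          rw [hrq]
          exact inv_smul_smul₀ (ne_of_gt hu0) _
    · apply Subtype.ext
      show rD (u • q.1, u • q.2) = u
      exact hrq
  continuous_toFun := by
    have hrc : Continuous fun p : Dset => rD p.1 :=
      ((continuous_fst.comp continuous_subtype_val).norm).max
        ((continuous_snd.comp continuous_subtype_val).norm)
    have hrinv : Continuous fun p : Dset => (rD p.1)⁻¹ :=
      hrc.inv₀ fun p => ne_of_gt (rD_pos_of_Dset p.2)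
    apply Continuous.prodMk
    · apply Continuous.subtype_mk
      exact (hrinv.smul (continuous_fst.comp continuous_subtype_val)).prodMk
        (hrinv.smul (continuous_snd.comp continuous_subtype_val))
    · exact hrc.subtype_mk _
  continuous_invFun := by
    apply Continuous.subtype_mk
    have hu : Continuous fun qu : Cset × Ioc (0:ℝ) 1 => (qu.2 : ℝ) :=
      continuous_subtype_val.comp continuous_snd
    exact (hu.smul ((continuous_fst.comp (continuous_subtype_val.comp continuous_fst)))).prodMk
      (hu.smul ((continuous_snd.comp (continuous_subtype_val.comp continuous_fst))))

/-! ### `Cset ≃ₜ Circle` -/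

lemma Cset_compact : IsCompact Cset := by
  have hcov : Cset = ⋃ ij : Fin 3 × Fin 3,
      (fun ts : ℝ × ℝ => (ts.1 • Pv ij.1, ts.2 • Pv ij.2)) ''
        ((Icc (0:ℝ) 1 ×ˢ Icc (0:ℝ) 1) ∩ {ts : ℝ × ℝ | max ts.1 ts.2 = 1} ∩
          {ts : ℝ × ℝ | ij.1 ≠ ij.2 ∨ ts.1 = 0 ∨ ts.2 = 0}) := by
    ext p
    constructor
    · rintro ⟨⟨hne, i, j, t, s, ht0, ht1, hs0, hs1, hd, h1, h2⟩, hmax⟩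
      apply mem_iUnion.mpr
      refine ⟨(i, j), (t, s), ⟨⟨⟨⟨ht0, ht1⟩, hs0, hs1⟩, ?_⟩, hd⟩, ?_⟩
      · show max t s = 1
        rwa [h1, h2, norm_smul_Pv _ _ ht0, norm_smul_Pv _ _ hs0] at hmax
      · show (t • Pv i, s • Pv j) = p
        rw [← h1, ← h2]
    · intro hp
      obtain ⟨⟨i, j⟩, ⟨t, s⟩, ⟨⟨⟨⟨ht0, ht1⟩, hs0, hs1⟩, hmax⟩, hd⟩, hpe⟩ := mem_iUnion.mp hp
      have hmax' : max t s = 1 := hmax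
      have hd' : i ≠ j ∨ t = 0 ∨ s = 0 := hd
      have ht0 : (0:ℝ) ≤ t := ht0
      have ht1 : t ≤ 1 := ht1
      have hs0 : (0:ℝ) ≤ s := hs0
      have hs1 : s ≤ 1 := hs1
      have hp1 : p.1 = t • Pv i := congrArg Prod.fst hpe.symm
      have hp2 : p.2 = s • Pv j := congrArg Prod.snd hpe.symm
      have hne : p.1 ≠ p.2 := by
        rw [hp1, hp2]
        intro h
        rcases hd' with hd2 | hd2 | hd2
        · obtain ⟨e1, e2⟩ := Pv_opp hd2 ht0 hs0 h
          rw [e1, e2] at hmax'; norm_num at hmax'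
        · rw [hd2, zero_smul] at h
          have hs' : s = 0 := by
            have := congrArg norm h.symm
            rwa [norm_zero, norm_smul_Pv _ _ hs0] at this
          rw [hd2, hs'] at hmax'; norm_num at hmax'
        · rw [hd2, zero_smul] at h
          have ht' : t = 0 := by
            have := congrArg norm h
            rwa [norm_zero, norm_smul_Pv _ _ ht0] at this
          rw [hd2, ht'] at hmax'; norm_num at hmax'
      refine ⟨⟨hne, i, j, t, s, ht0, ht1, hs0, hs1, hd', hp1, hp2⟩, ?_⟩
      rw [hp1, hp2, norm_smul_Pv _ _ ht0, norm_smul_Pv _ _ hs0]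
      exact hmax'
  rw [hcov]
  apply isCompact_iUnion
  intro ij
  apply IsCompact.image
  · apply IsCompact.of_isClosed_subset (isCompact_Icc.prod isCompact_Icc)
    · apply IsClosed.inter
      · apply IsClosed.inter
        · exact (isClosed_Icc.prod isClosed_Icc)
        · exact isClosed_eq (continuous_fst.max continuous_snd) continuous_const
      · by_cases hij : ij.1 = ij.2
        · have he : {ts : ℝ × ℝ | ij.1 ≠ ij.2 ∨ ts.1 = 0 ∨ ts.2 = 0}
              = {ts : ℝ × ℝ | ts.1 = 0} ∪ {ts : ℝ × ℝ | ts.2 = 0} := by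
            ext ts; simp [hij]
          rw [he]
          exact (isClosed_eq continuous_fst continuous_const).union
            (isClosed_eq continuous_snd continuous_const)
        · have he : {ts : ℝ × ℝ | ij.1 ≠ ij.2 ∨ ts.1 = 0 ∨ ts.2 = 0} = univ := by
            ext ts; simp [hij]
          rw [he]; exact isClosed_univ
    · rintro ts ⟨⟨hts, -⟩, -⟩
      exact hts
  · exact (continuous_fst.smul continuous_const).prodMk (continuous_snd.smul continuous_const)

lemma Cset_rep {p : ℂ × ℂ} (hp : p ∈ Cset) :
    ∃ i j : Fin 3, i ≠ j ∧ ∃ t s : ℝ,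
      0 ≤ t ∧ t ≤ 1 ∧ 0 ≤ s ∧ s ≤ 1 ∧ max t s = 1 ∧ p.1 = t • Pv i ∧ p.2 = s • Pv j := by
  obtain ⟨i, j, hij, t, s, ht0, ht1, hs0, hs1, h1, h2⟩ := Dset_rep hp.1
  refine ⟨i, j, hij, t, s, ht0, ht1, hs0, hs1, ?_, h1, h2⟩
  have := hp.2
  rwa [h1, h2, norm_smul_Pv _ _ ht0, norm_smul_Pv _ _ hs0] at this

lemma Cset_sub_ne {p : ℂ × ℂ} (hp : p ∈ Cset) : p.1 - p.2 ≠ 0 :=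
  sub_ne_zero.mpr hp.1.1

lemma circmem {z : ℂ} (h : ‖z‖ = 1) : z ∈ Submonoid.unitSphere ℂ := by
  rw [Submonoid.unitSphere, Submonoid.mem_mk]
  simpa [mem_sphere_zero_iff_norm] using h

noncomputable def gammaFun (p : Cset) : Circle :=
  ⟨‖(p : ℂ × ℂ).1 - (p : ℂ × ℂ).2‖⁻¹ • ((p : ℂ × ℂ).1 - (p : ℂ × ℂ).2), circmem (by
    have hz := Cset_sub_ne p.2
    rw [norm_smul, Real.norm_eq_abs, abs_of_nonneg (inv_nonneg.mpr (norm_nonneg _)),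
      inv_mul_cancel₀ (norm_ne_zero_iff.mpr hz)])⟩

lemma gammaFun_cont : Continuous gammaFun := by
  apply Continuous.subtype_mk
  have hz : Continuous fun p : Cset => (p : ℂ × ℂ).1 - (p : ℂ × ℂ).2 :=
    (continuous_fst.comp continuous_subtype_val).sub
      (continuous_snd.comp continuous_subtype_val)
  exact (hz.norm.inv₀ fun p => norm_ne_zero_iff.mpr (Cset_sub_ne p.2)).smul hz

lemma gammaFun_inj : Function.Injective gammaFun := by
  intro p q h
  obtain ⟨i, j, hij, t, s, ht0, ht1, hs0, hs1, htm, h1, h2⟩ := Cset_rep p.2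
  obtain ⟨k, l, hkl, t', s', ht0', ht1', hs0', hs1', htm', h1', h2'⟩ := Cset_rep q.2
  set z := (p : ℂ × ℂ).1 - (p : ℂ × ℂ).2 with hzdef
  set w := (q : ℂ × ℂ).1 - (q : ℂ × ℂ).2 with hwdef
  have hz : z ≠ 0 := Cset_sub_ne p.2
  have hw : w ≠ 0 := Cset_sub_ne q.2
  have hzn : ‖z‖ ≠ 0 := norm_ne_zero_iff.mpr hz
  have hwn : ‖w‖ ≠ 0 := norm_ne_zero_iff.mpr hw
  have heq : ‖z‖⁻¹ • z = ‖w‖⁻¹ • w := congrArg Subtype.val h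
  set lam : ℝ := ‖z‖ * ‖w‖⁻¹ with hlam
  have hlampos : 0 < lam := by
    apply mul_pos ((norm_nonneg z).lt_of_ne (Ne.symm hzn))
    exact inv_pos.mpr ((norm_nonneg w).lt_of_ne (Ne.symm hwn))
  have hzw : z = lam • w := by
    calc z = ‖z‖ • (‖z‖⁻¹ • z) := (smul_inv_smul₀ hzn z).symm
    _ = ‖z‖ • (‖w‖⁻¹ • w) := by rw [heq]
    _ = lam • w := by rw [smul_smul]
  have hmain : t • Pv i - s • Pv j = (lam * t') • Pv k - (lam * s') • Pv l := by
    rw [← h1, ← h2, ← hzdef, hzw, hwdef, h1', h2', smul_sub, smul_smul, smul_smul]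
  obtain ⟨e1, e2⟩ := Pv_sep hij hkl ht0 hs0 (by positivity) (by positivity) hmain
  have ht : t = lam * t' := by
    have := congrArg norm e1
    rwa [norm_smul_Pv _ _ ht0, norm_smul_Pv _ _ (by positivity)] at this
  have hs : s = lam * s' := by
    have := congrArg norm e2
    rwa [norm_smul_Pv _ _ hs0, norm_smul_Pv _ _ (by positivity)] at this
  have hlam1 : lam = 1 := by
    have : max t s = lam * max t' s' := by
      rw [ht, hs, mul_max_of_nonneg _ _ hlampos.le]
    rw [htm, htm', mul_one] at this
    exact this.symm
  rw [hlam1, one_mul] at e1 e2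
  apply Subtype.ext
  apply Prod.ext
  · rw [h1, h1']; exact e1
  · rw [h2, h2']; exact e2

lemma gammaFun_surj : Function.Surjective gammaFun := by
  intro u
  have hu : ‖(u : ℂ)‖ = 1 := norm_eq_of_mem_sphere u
  have hune : (u : ℂ) ≠ 0 := by
    intro h; rw [h, norm_zero] at hu; norm_num at hu
  obtain ⟨i, j, hij, a, b, ha, hb, hab⟩ := Pv_cover (u : ℂ)
  set M : ℝ := max a b with hM
  have hMpos : 0 < M := by
    rcases lt_or_ge 0 M with h | h
    · exact h
    · exfalso
      have ha0 : a = 0 := le_antisymm (le_trans (le_max_left _ _) h) ha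
      have hb0 : b = 0 := le_antisymm (le_trans (le_max_right _ _) h) hb
      rw [ha0, hb0] at hab
      simp only [zero_smul, sub_self] at hab
      exact hune hab
  set t : ℝ := a / M with htdef
  set s : ℝ := b / M with hsdef
  have hmem : ((t • Pv i, s • Pv j) : ℂ × ℂ) ∈ Cset := by
    have hts : max t s = 1 := by
      rw [htdef, hsdef, max_div_div_right hMpos.le, ← hM, div_self (ne_of_gt hMpos)]
    have hz : t • Pv i - s • Pv j = M⁻¹ • (u : ℂ) := by
      rw [hab, smul_sub, smul_smul, smul_smul, htdef, hsdef]
      rw [inv_mul_eq_div, inv_mul_eq_div]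
    have hne : (t • Pv i : ℂ) ≠ s • Pv j := by
      intro h
      obtain ⟨h1, h2⟩ := Pv_opp hij (by positivity) (by positivity) h
      rw [h1, h2] at hts; norm_num at hts
    refine ⟨⟨hne, i, j, t, s, by positivity, ?_, by positivity, ?_, Or.inl hij, rfl, rfl⟩, ?_⟩
    · rw [htdef, div_le_one hMpos]; exact le_max_left _ _
    · rw [hsdef, div_le_one hMpos]; exact le_max_right _ _
    · rw [norm_smul_Pv _ _ (by positivity), norm_smul_Pv _ _ (by positivity)]
      exact hts
  refine ⟨⟨(t • Pv i, s • Pv j), hmem⟩, ?_⟩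
  apply Subtype.ext
  show ‖t • Pv i - s • Pv j‖⁻¹ • (t • Pv i - s • Pv j) = (u : ℂ)
  have hz : t • Pv i - s • Pv j = M⁻¹ • (u : ℂ) := by
    rw [hab, smul_sub, smul_smul, smul_smul, htdef, hsdef]
    rw [inv_mul_eq_div, inv_mul_eq_div]
  rw [hz, norm_smul, Real.norm_eq_abs, abs_of_nonneg (inv_nonneg.mpr hMpos.le), hu, mul_one,
    inv_inv, smul_smul, mul_inv_cancel₀ (ne_of_gt hMpos), one_smul]

instance : CompactSpace Cset := isCompact_iff_compactSpace.mp Cset_compact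

noncomputable def homeoCCircle : Cset ≃ₜ Circle :=
  Continuous.homeoOfEquivCompactToT2
    (f := Equiv.ofBijective gammaFun ⟨gammaFun_inj, gammaFun_surj⟩) gammaFun_cont

end YAux

/-- the subspace `D` of the configuration space of two distinct points
on the Y-graph where the points lie on distinct edges is homeomorphic to
`S¹ × (0,1]`, a punctured disc. -/
theorem distinct_edge_configuration_space_punctured_disc :
    Nonempty (DSpace ≃ₜ Circle × Ioc (0:ℝ) 1) :=
  ⟨homeoDD.trans (homeoDC.trans (homeoCCircle.prodCongr (Homeomorph.refl _)))⟩
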